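/- For every fixed $m \in \mathbb{N}$, $\int_3^n x \log \log x \, dx = \frac{n^2 \log \log n}{2} - \frac{n^2}{2}\, h_m(n) + O\left( \frac{n^2}{\log^{m+1} n} \right)$ as $n \to \infty$. -/

import Mathlib

open Filter Real

/-- `h_m(x) = ∑_{j=1}^m (j-1)! / (2^j log^j x)`. -/
noncomputable def hAux (m : ℕ) (x : ℝ) : ℝ :=
  ∑ j ∈ Finset.Icc 1 m, (Nat.factorial (j - 1) : ℝ) / (2 ^ j * Real.log x ^ j)


noncomputable def tAux (j : ℕ) (x : ℝ) : ℝ :=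
  (Nat.factorial (j - 1) : ℝ) * x / (2 ^ j * Real.log x ^ j)

lemma hasDerivAt_term (j : ℕ) (hj : 1 ≤ j) {x : ℝ} (hx : 1 < Real.log x) (hx0 : 0 < x) :
    HasDerivAt (fun y => y ^ 2 / 2 * ((Nat.factorial (j - 1) : ℝ) / (2 ^ j * Real.log y ^ j)))
      (tAux j x - tAux (j + 1) x) x := by
  have hlog : Real.log x ≠ 0 := by positivity
  have hlx : HasDerivAt Real.log x⁻¹ x := Real.hasDerivAt_log hx0.ne'
  have h1 : HasDerivAt (fun y => y ^ 2 / 2) x x := by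
    simpa using ((hasDerivAt_pow 2 x).div_const 2)
  have h2 : HasDerivAt (fun y => (2 : ℝ) ^ j * Real.log y ^ j)
      (2 ^ j * (j * Real.log x ^ (j - 1) * x⁻¹)) x := (hlx.pow j).const_mul _
  have hden : (2 : ℝ) ^ j * Real.log x ^ j ≠ 0 := by positivity
  have h3 : HasDerivAt (fun y => (Nat.factorial (j - 1) : ℝ) / (2 ^ j * Real.log y ^ j))
      (-((Nat.factorial (j - 1) : ℝ) * (2 ^ j * (j * Real.log x ^ (j - 1) * x⁻¹)))
        / (2 ^ j * Real.log x ^ j) ^ 2) x := by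
    exact ((hasDerivAt_const x ((Nat.factorial (j - 1) : ℝ))).div h2 hden).congr_deriv (by simp)
  have := h1.mul h3
  refine this.congr_deriv ?_
  obtain ⟨i, rfl⟩ := Nat.exists_eq_add_of_le hj
  simp only [tAux, Nat.add_sub_cancel_left, Nat.add_sub_cancel]
  have hfac : (Nat.factorial (i + 1) : ℝ) = (i + 1) * Nat.factorial i := by
    push_cast [Nat.factorial_succ]; ring
  rw [Nat.add_comm 1 i, hfac]
  field_simp
  push_cast
  ring

lemma telescope (m : ℕ) (f : ℕ → ℝ) :
    ∑ j ∈ Finset.Icc 1 m, (f j - f (j + 1)) = f 1 - f (m + 1) := by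
  induction m with
  | zero => simp
  | succ k ih =>
      rw [Finset.sum_Icc_succ_top (by omega : 1 ≤ k + 1), ih]
      ring

lemma hasDerivAt_phi (m : ℕ) {x : ℝ} (hx : 1 < Real.log x) (hx0 : 0 < x) :
    HasDerivAt (fun y => y ^ 2 * Real.log (Real.log y) / 2 - y ^ 2 / 2 * hAux m y)
      (x * Real.log (Real.log x) + tAux (m + 1) x) x := by
  have hlog0 : Real.log x ≠ 0 := by positivity
  have hlx : HasDerivAt Real.log x⁻¹ x := Real.hasDerivAt_log hx0.ne'
  have hll : HasDerivAt (fun y => Real.log (Real.log y)) (x⁻¹ / Real.log x) x := by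
    simpa [div_eq_mul_inv, mul_comm] using hlx.log hlog0
  have h1 : HasDerivAt (fun y => y ^ 2 * Real.log (Real.log y) / 2)
      (x * Real.log (Real.log x) + x / (2 * Real.log x)) x := by
    have := (((hasDerivAt_pow 2 x).mul hll).div_const 2)
    refine this.congr_deriv ?_
    field_simp
    ring
  have h2 : HasDerivAt (fun y => y ^ 2 / 2 * hAux m y)
      (∑ j ∈ Finset.Icc 1 m, (tAux j x - tAux (j + 1) x)) x := by
    have : HasDerivAt (fun y => ∑ j ∈ Finset.Icc 1 m,
        y ^ 2 / 2 * ((Nat.factorial (j - 1) : ℝ) / (2 ^ j * Real.log y ^ j)))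
        (∑ j ∈ Finset.Icc 1 m, (tAux j x - tAux (j + 1) x)) x := by
      apply HasDerivAt.fun_sum
      intro j hj
      exact hasDerivAt_term j (Finset.mem_Icc.mp hj).1 hx hx0
    convert this using 1
    ext y
    rw [hAux, Finset.mul_sum]
  rw [telescope] at h2
  have := h1.sub h2
  refine this.congr_deriv ?_
  have ht1 : tAux 1 x = x / (2 * Real.log x) := by
    simp [tAux, Nat.factorial]
  rw [ht1]
  ring

lemma log_gt_one {x : ℝ} (hx : 3 ≤ x) : 1 < Real.log x := by
  rw [show (1:ℝ) = Real.log (Real.exp 1) by simp]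
  apply Real.log_lt_log (Real.exp_pos 1)
  linarith [Real.exp_one_lt_d9]

lemma contOn_log {s : Set ℝ} (hs : ∀ x ∈ s, (3:ℝ) ≤ x) :
    ContinuousOn Real.log s := by
  apply Real.continuousOn_log.mono
  intro x hx
  have := hs x hx
  simp only [Set.mem_compl_iff, Set.mem_singleton_iff]
  intro h; rw [h] at this; norm_num at this

lemma contOn_mll {s : Set ℝ} (hs : ∀ x ∈ s, (3:ℝ) ≤ x) :
    ContinuousOn (fun x => x * Real.log (Real.log x)) s := by
  apply continuousOn_id.mul
  apply ContinuousOn.log (contOn_log hs)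
  intro x hx
  have := log_gt_one (hs x hx)
  positivity

lemma contOn_tAux (j : ℕ) {s : Set ℝ} (hs : ∀ x ∈ s, (3:ℝ) ≤ x) :
    ContinuousOn (tAux j) s := by
  unfold tAux
  apply ContinuousOn.div
  · exact (continuousOn_const.mul continuousOn_id)
  · exact continuousOn_const.mul ((contOn_log hs).pow j)
  · intro x hx
    have := log_gt_one (hs x hx)
    positivity

lemma key_integral (m : ℕ) {n : ℝ} (hn : 3 ≤ n) :
    (∫ x in (3:ℝ)..n, x * Real.log (Real.log x)) =
      (n ^ 2 * Real.log (Real.log n) / 2 - n ^ 2 / 2 * hAux m n) -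
      ((3:ℝ) ^ 2 * Real.log (Real.log 3) / 2 - (3:ℝ) ^ 2 / 2 * hAux m 3) -
      ∫ x in (3:ℝ)..n, tAux (m + 1) x := by
  have hsub : Set.uIcc (3:ℝ) n ⊆ {x | (3:ℝ) ≤ x} := by
    rw [Set.uIcc_of_le hn]
    intro x hx; exact hx.1
  have hs : ∀ x ∈ Set.uIcc (3:ℝ) n, (3:ℝ) ≤ x := fun x hx => hsub hx
  have hint1 : IntervalIntegrable (fun x => x * Real.log (Real.log x)) MeasureTheory.volume 3 n :=
    (contOn_mll hs).intervalIntegrable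
  have hint2 : IntervalIntegrable (tAux (m+1)) MeasureTheory.volume 3 n :=
    (contOn_tAux (m+1) hs).intervalIntegrable
  have hftc := intervalIntegral.integral_eq_sub_of_hasDerivAt
    (f := fun y => y ^ 2 * Real.log (Real.log y) / 2 - y ^ 2 / 2 * hAux m y)
    (f' := fun x => x * Real.log (Real.log x) + tAux (m + 1) x)
    (fun x hx => hasDerivAt_phi m (log_gt_one (hs x hx)) (by linarith [hs x hx]))
    (hint1.add hint2)
  rw [intervalIntegral.integral_add hint1 hint2] at hftc
  linarith [hftc]

lemma tAux_bound (m : ℕ) {n : ℝ} (hn : 9 ≤ n) :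
    ‖∫ x in (3:ℝ)..n, tAux (m + 1) x‖ ≤
      (Nat.factorial m : ℝ) * n + (Nat.factorial m : ℝ) * (n ^ 2 / Real.log n ^ (m + 1)) := by
  have hn0 : (0:ℝ) < n := by linarith
  have hsq : (3:ℝ) ≤ Real.sqrt n := by
    rw [show (3:ℝ) = Real.sqrt 9 by
      rw [show (9:ℝ) = 3^2 by norm_num, Real.sqrt_sq]; norm_num]
    exact Real.sqrt_le_sqrt hn
  have hsqn : Real.sqrt n ≤ n := by
    nlinarith [Real.sq_sqrt hn0.le, Real.sqrt_nonneg n]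
  have hs1 : ∀ x ∈ Set.uIcc (3:ℝ) (Real.sqrt n), (3:ℝ) ≤ x := by
    rw [Set.uIcc_of_le hsq]; exact fun x hx => hx.1
  have hs2 : ∀ x ∈ Set.uIcc (Real.sqrt n) n, (3:ℝ) ≤ x := by
    rw [Set.uIcc_of_le hsqn]; exact fun x hx => le_trans hsq hx.1
  have hi1 : IntervalIntegrable (tAux (m+1)) MeasureTheory.volume 3 (Real.sqrt n) :=
    (contOn_tAux (m+1) hs1).intervalIntegrable
  have hi2 : IntervalIntegrable (tAux (m+1)) MeasureTheory.volume (Real.sqrt n) n :=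
    (contOn_tAux (m+1) hs2).intervalIntegrable
  rw [← intervalIntegral.integral_add_adjacent_intervals hi1 hi2]
  have hlogn : 1 < Real.log n := log_gt_one (by linarith)
  -- bound on [3, √n]
  have b1 : ‖∫ x in (3:ℝ)..(Real.sqrt n), tAux (m + 1) x‖ ≤
      ((Nat.factorial m : ℝ) * Real.sqrt n) * |Real.sqrt n - 3| := by
    apply intervalIntegral.norm_integral_le_of_norm_le_const
    intro x hx
    rw [Set.uIoc_of_le hsq] at hx
    have hx3 : (3:ℝ) < x := hx.1
    have hlx : 1 < Real.log x := log_gt_one hx3.le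
    have hd : (1:ℝ) ≤ 2 ^ (m+1) * Real.log x ^ (m+1) := by
      have h1 : (1:ℝ) ≤ 2 ^ (m+1) := one_le_pow₀ (by norm_num)
      have h2 : (1:ℝ) ≤ Real.log x ^ (m+1) := one_le_pow₀ hlx.le
      nlinarith
    have : tAux (m+1) x ≤ (Nat.factorial m : ℝ) * Real.sqrt n := by
      rw [tAux, Nat.add_sub_cancel, div_le_iff₀ (by positivity)]
      have hfn : (0:ℝ) ≤ (Nat.factorial m : ℝ) := by positivity
      have h1 : (Nat.factorial m : ℝ) * x ≤ (Nat.factorial m : ℝ) * Real.sqrt n :=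
        mul_le_mul_of_nonneg_left hx.2 hfn
      have h2 : (Nat.factorial m : ℝ) * Real.sqrt n ≤
          (Nat.factorial m : ℝ) * Real.sqrt n * (2 ^ (m+1) * Real.log x ^ (m+1)) :=
        le_mul_of_one_le_right (by positivity) hd
      linarith
    rw [Real.norm_eq_abs, abs_of_nonneg (by rw [tAux]; positivity)]
    exact this
  -- bound on [√n, n]
  have b2 : ‖∫ x in (Real.sqrt n)..n, tAux (m + 1) x‖ ≤
      ((Nat.factorial m : ℝ) * n / Real.log n ^ (m+1)) * |n - Real.sqrt n| := by
    apply intervalIntegral.norm_integral_le_of_norm_le_const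
    intro x hx
    rw [Set.uIoc_of_le hsqn] at hx
    have hx3 : (3:ℝ) ≤ x := le_trans hsq hx.1.le
    have hlx : 1 < Real.log x := log_gt_one hx3
    have hlog2 : Real.log n / 2 ≤ Real.log x := by
      rw [div_le_iff₀ (by norm_num)]
      calc Real.log n = Real.log (Real.sqrt n * Real.sqrt n) := by
            rw [Real.mul_self_sqrt hn0.le]
        _ = Real.log (Real.sqrt n) + Real.log (Real.sqrt n) := by
            rw [Real.log_mul (by positivity) (by positivity)]
        _ ≤ Real.log x + Real.log x := by
            have := Real.log_le_log (by positivity) hx.1.le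
            linarith
        _ = Real.log x * 2 := by ring
    have hd : Real.log n ^ (m+1) ≤ 2 ^ (m+1) * Real.log x ^ (m+1) := by
      calc Real.log n ^ (m+1) = 2 ^ (m+1) * (Real.log n / 2) ^ (m+1) := by
            rw [div_pow]; field_simp
        _ ≤ 2 ^ (m+1) * Real.log x ^ (m+1) := by
            apply mul_le_mul_of_nonneg_left _ (by positivity)
            exact pow_le_pow_left₀ (by linarith) hlog2 _
    have : tAux (m+1) x ≤ (Nat.factorial m : ℝ) * n / Real.log n ^ (m+1) := by
      rw [tAux, Nat.add_sub_cancel, div_le_div_iff₀ (by positivity) (by positivity)]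
      have hfn : (0:ℝ) ≤ (Nat.factorial m : ℝ) := by positivity
      have hxn : x ≤ n := hx.2
      have hLp : (0:ℝ) < Real.log n ^ (m+1) := pow_pos (by linarith) _
      have hA : (Nat.factorial m : ℝ) * x * Real.log n ^ (m+1) ≤
          (Nat.factorial m : ℝ) * n * Real.log n ^ (m+1) :=
        mul_le_mul_of_nonneg_right (mul_le_mul_of_nonneg_left hxn hfn) hLp.le
      have hB : (Nat.factorial m : ℝ) * n * Real.log n ^ (m+1) ≤
          (Nat.factorial m : ℝ) * n * (2 ^ (m+1) * Real.log x ^ (m+1)) :=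
        mul_le_mul_of_nonneg_left hd (by positivity)
      linarith
    rw [Real.norm_eq_abs, abs_of_nonneg (by rw [tAux]; positivity)]
    exact this
  calc ‖(∫ x in (3:ℝ)..(Real.sqrt n), tAux (m + 1) x) +
        ∫ x in (Real.sqrt n)..n, tAux (m + 1) x‖
      ≤ ‖∫ x in (3:ℝ)..(Real.sqrt n), tAux (m + 1) x‖ +
        ‖∫ x in (Real.sqrt n)..n, tAux (m + 1) x‖ := norm_add_le _ _
    _ ≤ ((Nat.factorial m : ℝ) * Real.sqrt n) * |Real.sqrt n - 3| +
        ((Nat.factorial m : ℝ) * n / Real.log n ^ (m+1)) * |n - Real.sqrt n| := add_le_add b1 b2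
    _ ≤ (Nat.factorial m : ℝ) * n + (Nat.factorial m : ℝ) * (n ^ 2 / Real.log n ^ (m + 1)) := by
        rw [abs_of_nonneg (by linarith), abs_of_nonneg (by linarith)]
        have hfn : (0:ℝ) ≤ (Nat.factorial m : ℝ) := by positivity
        have hLp : (0:ℝ) < Real.log n ^ (m+1) := pow_pos (by linarith) _
        have e1 : ((Nat.factorial m : ℝ) * Real.sqrt n) * (Real.sqrt n - 3) ≤
            (Nat.factorial m : ℝ) * n := by
          nlinarith [Real.sq_sqrt hn0.le, Real.sqrt_nonneg n]
        have e2 : ((Nat.factorial m : ℝ) * n / Real.log n ^ (m+1)) * (n - Real.sqrt n) ≤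
            (Nat.factorial m : ℝ) * (n ^ 2 / Real.log n ^ (m + 1)) := by
          rw [div_mul_eq_mul_div, ← mul_div_assoc, div_le_div_iff₀ hLp hLp]
          have h : (Nat.factorial m : ℝ) * n * (n - Real.sqrt n) ≤
              (Nat.factorial m : ℝ) * n ^ 2 := by nlinarith [mul_nonneg (mul_nonneg hfn hn0.le) (Real.sqrt_nonneg n)]
          exact mul_le_mul_of_nonneg_right h hLp.le
        linarith

lemma eventually_logpow_le (m : ℕ) : ∀ᶠ n : ℝ in atTop, Real.log n ^ (m + 1) ≤ n := by
  have hr : (0:ℝ) < 1 / (m + 1) := by positivity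
  have h := (isLittleO_log_rpow_atTop hr).bound one_pos
  filter_upwards [h, eventually_ge_atTop (1:ℝ)] with n hb h1
  have hn0 : (0:ℝ) ≤ n := by linarith
  have hlog : Real.log n ≤ n ^ ((1:ℝ) / (m + 1)) := by
    have := hb
    rw [Real.norm_eq_abs, Real.norm_eq_abs, one_mul] at this
    calc Real.log n ≤ |Real.log n| := le_abs_self _
      _ ≤ |n ^ ((1:ℝ) / (m + 1))| := this
      _ = n ^ ((1:ℝ) / (m + 1)) := abs_of_nonneg (Real.rpow_nonneg hn0 _)
  calc Real.log n ^ (m + 1) ≤ (n ^ ((1:ℝ) / (m + 1))) ^ (m + 1) :=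
        pow_le_pow_left₀ (Real.log_nonneg h1) hlog _
    _ = n := by
        rw [← Real.rpow_natCast (n ^ ((1:ℝ) / (m + 1))) (m + 1), ← Real.rpow_mul hn0]
        push_cast
        rw [one_div, inv_mul_cancel₀ (by positivity : ((m:ℝ) + 1) ≠ 0), Real.rpow_one]


/-- For every fixed `m ≥ 1`,
`∫_3^n x log log x dx = n² log log n / 2 - (n²/2) h_m(n) + O(n² / log^{m+1} n)` as `n → ∞`. -/
theorem integral_x_loglog (m : ℕ) (hm : 1 ≤ m) :
    (fun n : ℝ =>
        (∫ x in (3 : ℝ)..n, x * Real.log (Real.log x)) -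
          (n ^ 2 * Real.log (Real.log n) / 2 - n ^ 2 / 2 * hAux m n))
      =O[atTop] fun n : ℝ => n ^ 2 / Real.log n ^ (m + 1) := by
  set C3 : ℝ := (3:ℝ) ^ 2 * Real.log (Real.log 3) / 2 - (3:ℝ) ^ 2 / 2 * hAux m 3 with hC3
  apply Asymptotics.IsBigO.of_bound (1 + 2 * Nat.factorial m)
  filter_upwards [eventually_ge_atTop (9:ℝ), eventually_logpow_le m,
    eventually_ge_atTop (‖C3‖)] with n hn hL hC
  have hn3 : (3:ℝ) ≤ n := by linarith
  have hlogn : 1 < Real.log n := log_gt_one hn3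
  have hLp : (0:ℝ) < Real.log n ^ (m + 1) := pow_pos (by linarith) _
  have hn0 : (0:ℝ) < n := by linarith
  have hng : n ≤ n ^ 2 / Real.log n ^ (m + 1) := by
    rw [le_div_iff₀ hLp]
    nlinarith
  rw [key_integral m hn3]
  have hb := tAux_bound m hn
  have hfn : (0:ℝ) ≤ (Nat.factorial m : ℝ) := by positivity
  have hq : (0:ℝ) ≤ n ^ 2 / Real.log n ^ (m + 1) := by positivity
  calc ‖(n ^ 2 * Real.log (Real.log n) / 2 - n ^ 2 / 2 * hAux m n) - C3 -
        (∫ x in (3:ℝ)..n, tAux (m + 1) x) -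
        (n ^ 2 * Real.log (Real.log n) / 2 - n ^ 2 / 2 * hAux m n)‖
      = ‖-C3 - (∫ x in (3:ℝ)..n, tAux (m + 1) x)‖ := by ring_nf
    _ ≤ ‖C3‖ + ‖∫ x in (3:ℝ)..n, tAux (m + 1) x‖ := by
        calc ‖-C3 - (∫ x in (3:ℝ)..n, tAux (m + 1) x)‖
            ≤ ‖-C3‖ + ‖∫ x in (3:ℝ)..n, tAux (m + 1) x‖ := norm_sub_le _ _
          _ = ‖C3‖ + ‖∫ x in (3:ℝ)..n, tAux (m + 1) x‖ := by rw [norm_neg]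
    _ ≤ n + ((Nat.factorial m : ℝ) * n + (Nat.factorial m : ℝ) *
          (n ^ 2 / Real.log n ^ (m + 1))) := add_le_add hC hb
    _ ≤ (1 + 2 * Nat.factorial m) * ‖n ^ 2 / Real.log n ^ (m + 1)‖ := by
        simp only [Real.norm_eq_abs, abs_of_nonneg hq]
        have h1 : (Nat.factorial m : ℝ) * n ≤
            (Nat.factorial m : ℝ) * (n ^ 2 / Real.log n ^ (m + 1)) :=
          mul_le_mul_of_nonneg_left hng hfn
        have h2 : (1:ℝ) ≤ Nat.factorial m := by
          exact_mod_cast Nat.one_le_iff_ne_zero.mpr (Nat.factorial_ne_zero m)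
        have h3 : n ≤ n ^ 2 / Real.log n ^ (m + 1) := hng
        have h4 : (0:ℝ) ≤ ‖C3‖ := norm_nonneg _
        nlinarith
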